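/- Let S = {x ∈ ℝ³ : bᵀx = c} with ‖b‖ = 1 and reflection σ(x) = x − 2(bᵀx − c)b. Suppose p_j, p_k ∈ S, p_i, p_m ∈ ℝ³, and μ_ij(p_j − p_i) + μ_ik(p_k − p_i) + μ_im(p_m − p_i) = 0. Then the reflected points p_i' = σ(p_i), p_m' = σ(p_m) satisfy μ_ij(p_j − p_i') + μ_ik(p_k − p_i') + μ_im(p_m' − p_i') = 0. -/
import Mathlib


open scoped RealInnerProductSpace

theorem stmt_17 (b : EuclideanSpace ℝ (Fin 3)) (hb : ‖b‖ = 1) (c : ℝ)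
    (p_i p_j p_k p_m : EuclideanSpace ℝ (Fin 3))
    (hj : ⟪b, p_j⟫ = c) (hk : ⟪b, p_k⟫ = c)
    (μ_ij μ_ik μ_im : ℝ)
    (hcon : μ_ij • (p_j - p_i) + μ_ik • (p_k - p_i) + μ_im • (p_m - p_i) = 0) :
    let p_i' := p_i - (2 * (⟪b, p_i⟫ - c)) • b
    let p_m' := p_m - (2 * (⟪b, p_m⟫ - c)) • b
    μ_ij • (p_j - p_i') + μ_ik • (p_k - p_i') + μ_im • (p_m' - p_i') = 0 := by
  intro p_i' p_m'
  have key : μ_ij * (c - ⟪b, p_i⟫) + μ_ik * (c - ⟪b, p_i⟫)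
      + μ_im * (⟪b, p_m⟫ - ⟪b, p_i⟫) = 0 := by
    have h := congrArg (fun v => ⟪b, v⟫) hcon
    simpa [inner_add_right, inner_sub_right, inner_smul_right, hj, hk,
      mul_sub] using h
  have hexp : μ_ij • (p_j - p_i') + μ_ik • (p_k - p_i') + μ_im • (p_m' - p_i')
      = (μ_ij • (p_j - p_i) + μ_ik • (p_k - p_i) + μ_im • (p_m - p_i))
        - (2 * (μ_ij * (c - ⟪b, p_i⟫) + μ_ik * (c - ⟪b, p_i⟫)
            + μ_im * (⟪b, p_m⟫ - ⟪b, p_i⟫))) • b := by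
    simp only [p_i', p_m']
    module
  rw [hexp, hcon, key]
  simp
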